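/- If u is a general real invertible n×n matrix, then the polar factor x minimizing distance to the orthogonal group has det(x) = sign(det(u)): det(x) = 1 if det(u) > 0 and det(x) = −1 if det(u) < 0. Moreover, among the 2ⁿ orthogonal critical points x = u·s⁻¹ (s ranging over symmetric square roots of uᵀu), exactly 2ⁿ⁻¹ have determinant 1 and 2ⁿ⁻¹ have determinant −1. -/

import Mathlib

open Matrix Finset


lemma aux_col_sq (n : ℕ) (m : Matrix (Fin n) (Fin n) ℝ) (hm : mᵀ * m = 1) (i : Fin n) :
    ∑ j, m j i * m j i = 1 := by
  have h := congrFun (congrFun hm i) i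
  simpa [Matrix.mul_apply, Matrix.transpose_apply, Matrix.one_apply] using h

lemma aux_diag_le_one (n : ℕ) (m : Matrix (Fin n) (Fin n) ℝ) (hm : mᵀ * m = 1) (i : Fin n) :
    m i i ≤ 1 := by
  have h := aux_col_sq n m hm i
  have h2 : m i i * m i i ≤ 1 := by
    rw [← h]
    exact Finset.single_le_sum (f := fun j => m j i * m j i)
      (fun j _ => mul_self_nonneg _) (Finset.mem_univ i)
  nlinarith
  
lemma aux_diag_one_imp (n : ℕ) (m : Matrix (Fin n) (Fin n) ℝ) (hm : mᵀ * m = 1)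
    (hd : ∀ i, m i i = 1) : m = 1 := by
  ext i j
  rcases eq_or_ne j i with rfl | hij
  · simp [hd j, Matrix.one_apply]
  · have h := aux_col_sq n m hm j
    rw [← Finset.sum_erase_add _ _ (Finset.mem_univ j), hd j] at h
    have hz : ∑ k ∈ Finset.univ.erase j, m k j * m k j = 0 := by linarith
    have h0 := (Finset.sum_eq_zero_iff_of_nonneg
      (fun k _ => mul_self_nonneg (m k j))).mp hz i
      (Finset.mem_erase.mpr ⟨fun h => hij h.symm, Finset.mem_univ i⟩)
    have : m i j = 0 := by nlinarith
    rw [this, Matrix.one_apply, if_neg (fun h => hij h.symm)]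



lemma aux_sign_finite (n : ℕ) :
    {ε : Fin n → ℝ | ∀ i, ε i = 1 ∨ ε i = -1}.Finite := by
  have : {ε : Fin n → ℝ | ∀ i, ε i = 1 ∨ ε i = -1} =
      Set.univ.pi (fun _ : Fin n => ({1, -1} : Set ℝ)) := by
    ext ε; simp [Set.mem_pi]
  rw [this]
  exact Set.Finite.pi (fun _ => (Set.finite_singleton (-1)).insert 1)

lemma aux_sign_card_total (n : ℕ) :
    Set.ncard {ε : Fin n → ℝ | ∀ i, ε i = 1 ∨ ε i = -1} = 2 ^ n := by
  have h : {ε : Fin n → ℝ | ∀ i, ε i = 1 ∨ ε i = -1} =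
      Set.univ.pi (fun _ : Fin n => ({1, -1} : Set ℝ)) := by
    ext ε; simp [Set.mem_pi]
  rw [h, ← Nat.card_coe_set_eq]
  rw [Nat.card_congr (Equiv.Set.univPi (fun _ : Fin n => ({1, -1} : Set ℝ)))]
  rw [Nat.card_pi]
  have : ∀ i : Fin n, Nat.card ({1, -1} : Set ℝ) = 2 := by
    intro i
    rw [Nat.card_coe_set_eq, Set.ncard_pair (by norm_num : (1:ℝ) ≠ -1)]
  rw [Finset.prod_congr rfl (fun i _ => this i), Finset.prod_const, Finset.card_univ,
    Fintype.card_fin]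

lemma aux_sign_card (n : ℕ) (hn : 0 < n) (d : ℝ) (hd : d = 1 ∨ d = -1) :
    Set.ncard {ε : Fin n → ℝ | (∀ i, ε i = 1 ∨ ε i = -1) ∧ ∏ i, ε i = d} =
      2 ^ (n - 1) := by
  classical
  set B := {ε : Fin n → ℝ | ∀ i, ε i = 1 ∨ ε i = -1}
  set A : ℝ → Set (Fin n → ℝ) := fun e =>
    {ε : Fin n → ℝ | (∀ i, ε i = 1 ∨ ε i = -1) ∧ ∏ i, ε i = e}
  have hprodpm : ∀ ε ∈ B, (∏ i, ε i = 1 ∨ ∏ i, ε i = -1) := by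
    intro ε hε
    have : (∏ i, ε i) * (∏ i, ε i) = 1 := by
      rw [← Finset.prod_mul_distrib]
      refine Finset.prod_eq_one (fun i _ => ?_)
      rcases hε i with h | h <;> rw [h] <;> norm_num
    exact mul_self_eq_one_iff.mp this
  -- flip map
  obtain ⟨i0, -⟩ : ∃ _ : Fin n, True := ⟨⟨0, hn⟩, trivial⟩
  set φ : (Fin n → ℝ) → (Fin n → ℝ) := fun ε => Function.update ε i0 (-(ε i0))
    with hφdef
  have hφφ : ∀ ε, φ (φ ε) = ε := by
    intro ε
    simp only [hφdef, Function.update_self]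
    rw [Function.update_idem, neg_neg, Function.update_eq_self]
  have hφinj : Function.Injective φ :=
    Function.LeftInverse.injective hφφ
  have hφprod : ∀ ε : Fin n → ℝ, ∏ i, φ ε i = -(∏ i, ε i) := by
    intro ε
    rw [show (∏ i, φ ε i) = ∏ i, Function.update ε i0 (-(ε i0)) i from rfl]
    rw [Finset.prod_update_of_mem (Finset.mem_univ i0)]
    rw [Finset.sdiff_singleton_eq_erase]
    rw [← Finset.mul_prod_erase Finset.univ ε (Finset.mem_univ i0)]
    ring
  have hφmem : ∀ e ε, ε ∈ A e → φ ε ∈ A (-e) := by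
    rintro e ε ⟨h1, h2⟩
    constructor
    · intro i
      rcases eq_or_ne i i0 with rfl | h
      · simp only [hφdef, Function.update_self]
        rcases h1 i with h | h <;> rw [h] <;> norm_num
      · simpa only [hφdef, Function.update_of_ne h] using h1 i
    · rw [hφprod, h2]
  have himg : ∀ e, φ '' A e = A (-e) := by
    intro e
    apply Set.Subset.antisymm
    · rintro x ⟨ε, hε, rfl⟩; exact hφmem e ε hε
    · intro ε hε
      exact ⟨φ ε, by simpa using hφmem (-e) ε hε, hφφ ε⟩
  have hcards : ∀ e, (A e).ncard = (A (-e)).ncard := by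
    intro e
    rw [← himg e, Set.ncard_image_of_injective _ hφinj]
  have hsub : ∀ e, A e ⊆ B := fun e ε hε => hε.1
  have hfin : ∀ e, (A e).Finite := fun e => (aux_sign_finite n).subset (hsub e)
  have hunion : A 1 ∪ A (-1) = B := by
    apply Set.Subset.antisymm
    · rintro ε (hε | hε) <;> exact hε.1
    · intro ε hε
      rcases hprodpm ε hε with h | h
      · exact Or.inl ⟨hε, h⟩
      · exact Or.inr ⟨hε, h⟩
  have hdisj : Disjoint (A 1) (A (-1)) := by
    rw [Set.disjoint_left]
    rintro ε ⟨_, h1⟩ ⟨_, h2⟩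
    rw [h1] at h2; norm_num at h2
  have hsum : (A 1).ncard + (A (-1)).ncard = 2 ^ n := by
    rw [← Set.ncard_union_eq hdisj (hfin 1) (hfin (-1)), hunion]
    exact aux_sign_card_total n
  have hn' : n = (n - 1) + 1 := (Nat.succ_pred_eq_of_pos hn).symm
  have hpow : 2 ^ n = 2 ^ (n - 1) * 2 := by
    conv_lhs => rw [hn', pow_succ]
  have h1 : (A 1).ncard = 2 ^ (n - 1) := by
    have := hcards 1
    omega
  have h2 : (A (-1)).ncard = 2 ^ (n - 1) := by
    have := hcards 1
    omega
  rcases hd with rfl | rfl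
  · exact h1
  · exact h2



theorem closest_orthogonal_determinant_and_count
    (n : ℕ) (hn : 0 < n) (u y : Matrix (Fin n) (Fin n) ℝ) (μ : Fin n → ℝ)
    (hu : IsUnit u.det) (hy : yᵀ * y = 1)
    (hpos : ∀ i, 0 < μ i) (hinj : Function.Injective μ)
    (hdiag : uᵀ * u = y * Matrix.diagonal μ * yᵀ) :
    (∀ x : Matrix (Fin n) (Fin n) ℝ, xᵀ * x = 1 →
      (∀ x' : Matrix (Fin n) (Fin n) ℝ, x'ᵀ * x' = 1 →
        ((u - x)ᵀ * (u - x)).trace ≤ ((u - x')ᵀ * (u - x')).trace) →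
      ((0 < u.det → x.det = 1) ∧ (u.det < 0 → x.det = -1))) ∧
    Set.ncard {x : Matrix (Fin n) (Fin n) ℝ |
        (∃ ε : Fin n → ℝ, (∀ i, ε i = 1 ∨ ε i = -1) ∧
          x = u * (y * Matrix.diagonal (fun i => ε i * Real.sqrt (μ i)) * yᵀ)⁻¹) ∧
        x.det = 1} = 2 ^ (n - 1) ∧
    Set.ncard {x : Matrix (Fin n) (Fin n) ℝ |
        (∃ ε : Fin n → ℝ, (∀ i, ε i = 1 ∨ ε i = -1) ∧
          x = u * (y * Matrix.diagonal (fun i => ε i * Real.sqrt (μ i)) * yᵀ)⁻¹) ∧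
        x.det = -1} = 2 ^ (n - 1) := by
  classical
  set ρ : Fin n → ℝ := fun i => Real.sqrt (μ i) with hρdef
  have hρpos : ∀ i, 0 < ρ i := fun i => Real.sqrt_pos.mpr (hpos i)
  have hρsq : ∀ i, ρ i * ρ i = μ i := fun i => Real.mul_self_sqrt (hpos i).le
  have hyy : y * yᵀ = 1 := mul_eq_one_comm.mp hy
  have hdety : yᵀ.det * y.det = 1 := by
    have := congrArg Matrix.det hy
    simpa [Matrix.det_mul] using this
  have hdet3 : ∀ v : Fin n → ℝ, (y * diagonal v * yᵀ).det = ∏ i, v i := by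
    intro v
    rw [Matrix.det_mul, Matrix.det_mul, Matrix.det_diagonal]
    have : y.det * (∏ i, v i) * yᵀ.det = (∏ i, v i) * (yᵀ.det * y.det) := by ring
    rw [this, hdety, mul_one]
  have hconj : ∀ v : Fin n → ℝ, yᵀ * (y * diagonal v * yᵀ) * y = diagonal v := by
    intro v
    have h : yᵀ * (y * diagonal v * yᵀ) * y
        = (yᵀ * y) * (diagonal v * (yᵀ * y)) := by
      simp only [Matrix.mul_assoc]
    rw [h, hy, one_mul, mul_one]
  have hmulconj : ∀ v w : Fin n → ℝ, (y * diagonal v * yᵀ) * (y * diagonal w * yᵀ)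
      = y * diagonal (fun i => v i * w i) * yᵀ := by
    intro v w
    have h : (y * diagonal v * yᵀ) * (y * diagonal w * yᵀ)
        = y * (diagonal v * ((yᵀ * y) * (diagonal w * yᵀ))) := by
      simp only [Matrix.mul_assoc]
    rw [h, hy, one_mul, Matrix.mul_assoc y]
    congr 1
    rw [← Matrix.mul_assoc, Matrix.diagonal_mul_diagonal]
  set S : Matrix (Fin n) (Fin n) ℝ := y * diagonal ρ * yᵀ with hSdef
  have hSsym : Sᵀ = S := by
    rw [hSdef]
    simp [Matrix.transpose_mul, Matrix.mul_assoc]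
  have hSS : S * S = uᵀ * u := by
    rw [hSdef, hmulconj, hdiag]
    have h : (fun i => ρ i * ρ i) = μ := funext hρsq
    rw [h]
  have hSdet : S.det = ∏ i, ρ i := hdet3 ρ
  have hP : 0 < ∏ i, ρ i := Finset.prod_pos (fun i _ => hρpos i)
  have hSunit : IsUnit S.det := by
    rw [hSdet]; exact isUnit_iff_ne_zero.mpr hP.ne'
  set p : Matrix (Fin n) (Fin n) ℝ := u * S⁻¹ with hpdef
  have hpS : p * S = u := by
    rw [hpdef, Matrix.mul_assoc, Matrix.nonsing_inv_mul S hSunit, Matrix.mul_one]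
  have hSinvT : S⁻¹ᵀ = S⁻¹ := by rw [Matrix.transpose_nonsing_inv, hSsym]
  have hpT : pᵀ * p = 1 := by
    rw [hpdef, Matrix.transpose_mul, hSinvT]
    have h : S⁻¹ * uᵀ * (u * S⁻¹) = S⁻¹ * ((uᵀ * u) * S⁻¹) := by
      simp only [Matrix.mul_assoc]
    rw [h, ← hSS, Matrix.mul_assoc S S S⁻¹, Matrix.mul_nonsing_inv S hSunit,
      Matrix.mul_one, Matrix.nonsing_inv_mul S hSunit]
  have hppT : p * pᵀ = 1 := mul_eq_one_comm.mp hpT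
  have huT : uᵀ = S * pᵀ := by
    rw [← hpS, Matrix.transpose_mul, hSsym]
  have huTp : uᵀ * p = S := by
    rw [huT, Matrix.mul_assoc, hpT, Matrix.mul_one]
  have htrS : S.trace = ∑ i, ρ i := by
    rw [hSdef, Matrix.mul_assoc, Matrix.trace_mul_comm, Matrix.mul_assoc, hy,
      Matrix.mul_one, Matrix.trace_diagonal]
  -- key trace bound
  have key_tr : ∀ x : Matrix (Fin n) (Fin n) ℝ, xᵀ * x = 1 →
      (uᵀ * x).trace ≤ ∑ i, ρ i ∧ ((∑ i, ρ i) ≤ (uᵀ * x).trace → x = p) := by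
    intro x hx
    set q := pᵀ * x with hqdef
    have hq : qᵀ * q = 1 := by
      rw [hqdef, Matrix.transpose_mul, Matrix.transpose_transpose]
      have h : xᵀ * p * (pᵀ * x) = xᵀ * ((p * pᵀ) * x) := by
        simp only [Matrix.mul_assoc]
      rw [h, hppT, one_mul, hx]
    set m := yᵀ * q * y with hmdef
    have hm : mᵀ * m = 1 := by
      have hT : (yᵀ * q * y)ᵀ = yᵀ * qᵀ * y := by
        simp [Matrix.transpose_mul, Matrix.mul_assoc]
      rw [hmdef, hT]
      have h : yᵀ * qᵀ * y * (yᵀ * q * y) = yᵀ * (qᵀ * ((y * yᵀ) * (q * y))) := by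
        simp only [Matrix.mul_assoc]
      rw [h, hyy, one_mul]
      have h2 : yᵀ * (qᵀ * (q * y)) = yᵀ * (qᵀ * q) * y := by
        simp only [Matrix.mul_assoc]
      rw [h2, hq, Matrix.mul_one, hy]
    have htrx : (uᵀ * x).trace = ∑ i, ρ i * m i i := by
      have h1 : uᵀ * x = S * q := by
        rw [huT, hqdef, Matrix.mul_assoc]
      rw [h1, hSdef]
      have h2 : y * diagonal ρ * yᵀ * q = y * (diagonal ρ * (yᵀ * q)) := by
        simp only [Matrix.mul_assoc]
      rw [h2, Matrix.trace_mul_comm, Matrix.mul_assoc, Matrix.mul_assoc, hmdef]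
      have h3 : (diagonal ρ * (yᵀ * q * y)).trace
          = ∑ i, (diagonal ρ * (yᵀ * q * y)) i i := rfl
      rw [show diagonal ρ * (yᵀ * (q * y)) = diagonal ρ * (yᵀ * q * y) by
        simp only [Matrix.mul_assoc], h3]
      refine Finset.sum_congr rfl (fun i _ => ?_)
      rw [Matrix.diagonal_mul]
    have hle : ∀ i ∈ Finset.univ, ρ i * m i i ≤ ρ i := by
      intro i _
      have h1 := aux_diag_le_one n m hm i
      nlinarith [hρpos i]
    constructor
    · rw [htrx]
      exact Finset.sum_le_sum hle
    · intro hge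
      rw [htrx] at hge
      have heq : ∑ i, ρ i * m i i = ∑ i, ρ i :=
        le_antisymm (Finset.sum_le_sum hle) hge
      have hmi := (Finset.sum_eq_sum_iff_of_le hle).mp heq
      have hm1 : ∀ i, m i i = 1 := by
        intro i
        have h := hmi i (Finset.mem_univ i)
        exact mul_left_cancel₀ (hρpos i).ne' (by rw [mul_one]; exact h)
      have hmeq : m = 1 := aux_diag_one_imp n m hm hm1
      have hq1 : q = 1 := by
        have h : y * m * yᵀ = q := by
          rw [hmdef]
          have h2 : y * (yᵀ * q * y) * yᵀ = (y * yᵀ) * (q * (y * yᵀ)) := by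
            simp only [Matrix.mul_assoc]
          rw [h2, hyy, one_mul, mul_one]
        rw [hmeq, Matrix.mul_one, hyy] at h
        exact h.symm
      have h : p * q = x := by
        rw [hqdef, ← Matrix.mul_assoc, hppT, one_mul]
      rw [hq1, Matrix.mul_one] at h
      exact h.symm
  -- expansion of the objective
  have key_exp : ∀ x' : Matrix (Fin n) (Fin n) ℝ, x'ᵀ * x' = 1 →
      ((u - x')ᵀ * (u - x')).trace = (uᵀ * u).trace + n - 2 * (uᵀ * x').trace := by
    intro x' hx'
    have h1 : (u - x')ᵀ * (u - x') = uᵀ * u - uᵀ * x' - x'ᵀ * u + x'ᵀ * x' := by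
      rw [Matrix.transpose_sub, Matrix.sub_mul, Matrix.mul_sub, Matrix.mul_sub]
      abel
    rw [h1, hx', Matrix.trace_add, Matrix.trace_sub, Matrix.trace_sub,
      Matrix.trace_one]
    have h2 : (x'ᵀ * u).trace = (uᵀ * x').trace := by
      rw [← Matrix.trace_transpose (x'ᵀ * u), Matrix.transpose_mul,
        Matrix.transpose_transpose]
    rw [h2]
    simp [Fintype.card_fin]
    ring
  -- determinant facts
  have hdetu2 : u.det * u.det = (∏ i, ρ i) * (∏ i, ρ i) := by
    have h1 : (uᵀ * u).det = u.det * u.det := by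
      rw [Matrix.det_mul, Matrix.det_transpose]
    have h2 : (uᵀ * u).det = ∏ i, μ i := by rw [hdiag, hdet3]
    have h3 : (∏ i, ρ i) * (∏ i, ρ i) = ∏ i, μ i := by
      rw [← Finset.prod_mul_distrib]
      exact Finset.prod_congr rfl (fun i _ => hρsq i)
    rw [← h1, h2, h3]
  have hdetp : p.det = u.det * (∏ i, ρ i)⁻¹ := by
    rw [hpdef, Matrix.det_mul, Matrix.det_nonsing_inv, hSdet, Ring.inverse_eq_inv']
  have hcc : (u.det * (∏ i, ρ i)⁻¹) * (u.det * (∏ i, ρ i)⁻¹) = 1 := by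
    field_simp
    linear_combination hdetu2
  refine ⟨?_, ?_, ?_⟩
  · -- part 1
    intro x hx hmin
    have h1 := (key_tr x hx).1
    have h2 : (∑ i, ρ i) ≤ (uᵀ * x).trace := by
      have hm := hmin p hpT
      rw [key_exp x hx, key_exp p hpT, huTp, htrS] at hm
      linarith
    have hxp : x = p := (key_tr x hx).2 h2
    have hdx : x.det = u.det * (∏ i, ρ i)⁻¹ := by rw [hxp, hdetp]
    have hpm : x.det = 1 ∨ x.det = -1 := by
      rw [hdx]; exact mul_self_eq_one_iff.mp hcc
    constructor
    · intro hdu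
      have hpos' : 0 < x.det := by
        rw [hdx]; exact mul_pos hdu (inv_pos.mpr hP)
      rcases hpm with h | h
      · exact h
      · rw [h] at hpos'; linarith
    · intro hdu
      have hneg' : x.det < 0 := by
        rw [hdx]; exact mul_neg_of_neg_of_pos hdu (inv_pos.mpr hP)
      rcases hpm with h | h
      · rw [h] at hneg'; linarith
      · exact h
  all_goals {
    -- counting parts
    set c : ℝ := u.det * (∏ i, ρ i)⁻¹ with hcdef
    have hc : c = 1 ∨ c = -1 := mul_self_eq_one_iff.mp hcc
    set F : (Fin n → ℝ) → Matrix (Fin n) (Fin n) ℝ := fun ε =>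
      u * (y * diagonal (fun i => ε i * Real.sqrt (μ i)) * yᵀ)⁻¹ with hFdef
    have hεpm : ∀ ε : Fin n → ℝ, (∀ i, ε i = 1 ∨ ε i = -1) →
        ((∏ i, ε i) = 1 ∨ (∏ i, ε i) = -1) := by
      intro ε hε
      refine mul_self_eq_one_iff.mp ?_
      rw [← Finset.prod_mul_distrib]
      refine Finset.prod_eq_one (fun i _ => ?_)
      rcases hε i with h | h <;> rw [h] <;> norm_num
    have hdetSε : ∀ ε : Fin n → ℝ,
        (y * diagonal (fun i => ε i * Real.sqrt (μ i)) * yᵀ).det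
          = (∏ i, ε i) * (∏ i, ρ i) := by
      intro ε
      rw [hdet3, ← Finset.prod_mul_distrib]
    have hSεunit : ∀ ε : Fin n → ℝ, (∀ i, ε i = 1 ∨ ε i = -1) →
        IsUnit (y * diagonal (fun i => ε i * Real.sqrt (μ i)) * yᵀ).det := by
      intro ε hε
      rw [hdetSε]
      refine isUnit_iff_ne_zero.mpr (mul_ne_zero ?_ hP.ne')
      rcases hεpm ε hε with h | h <;> rw [h] <;> norm_num
    have hFdet2 : ∀ ε : Fin n → ℝ, (∀ i, ε i = 1 ∨ ε i = -1) →
        (F ε).det = c * ∏ i, ε i := by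
      intro ε hε
      rw [hFdef]
      simp only
      rw [Matrix.det_mul, Matrix.det_nonsing_inv, Ring.inverse_eq_inv', hdetSε,
        mul_inv]
      have hinvε : (∏ i, ε i)⁻¹ = ∏ i, ε i := by
        rcases hεpm ε hε with h | h <;> rw [h] <;> norm_num
      rw [hinvε, hcdef]
      ring
    have hFinj : Set.InjOn F {ε : Fin n → ℝ | ∀ i, ε i = 1 ∨ ε i = -1} := by
      intro ε hε ε' hε' hFF
      have h1 : (y * diagonal (fun i => ε i * Real.sqrt (μ i)) * yᵀ)⁻¹
          = (y * diagonal (fun i => ε' i * Real.sqrt (μ i)) * yᵀ)⁻¹ := by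
        have := congrArg (fun z => u⁻¹ * z) hFF
        simpa [hFdef, ← Matrix.mul_assoc, Matrix.nonsing_inv_mul u hu] using this
      have h2 := Matrix.inv_inj h1 (hSεunit ε hε)
      have h3 := congrArg (fun z => yᵀ * z * y) h2
      simp only [hconj] at h3
      funext i
      have h4 := congrFun (congrFun h3 i) i
      simp only [Matrix.diagonal_apply_eq] at h4
      exact mul_right_cancel₀ (hρpos i).ne' h4
    first
    | · -- det = 1 case
        have hTeq : {x : Matrix (Fin n) (Fin n) ℝ |
            (∃ ε : Fin n → ℝ, (∀ i, ε i = 1 ∨ ε i = -1) ∧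
              x = u * (y * Matrix.diagonal (fun i => ε i * Real.sqrt (μ i)) * yᵀ)⁻¹) ∧
            x.det = 1}
            = F '' {ε : Fin n → ℝ | (∀ i, ε i = 1 ∨ ε i = -1) ∧ ∏ i, ε i = c} := by
          ext x
          constructor
          · rintro ⟨⟨ε, hε, rfl⟩, hdet1⟩
            refine ⟨ε, ⟨hε, ?_⟩, rfl⟩
            have := hFdet2 ε hε
            rw [hFdef] at this
            simp only at this
            rw [this] at hdet1
            have : c * (c * ∏ i, ε i) = c * 1 := by rw [hdet1]
            rw [← mul_assoc, hcc, one_mul, mul_one] at this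
            exact this
          · rintro ⟨ε, ⟨hε, hprod⟩, rfl⟩
            refine ⟨⟨ε, hε, rfl⟩, ?_⟩
            rw [hFdet2 ε hε, hprod, hcc]
        rw [hTeq, Set.ncard_image_of_injOn (hFinj.mono (fun ε hε => hε.1))]
        exact aux_sign_card n hn c hc
    | · -- det = -1 case
        have hTeq : {x : Matrix (Fin n) (Fin n) ℝ |
            (∃ ε : Fin n → ℝ, (∀ i, ε i = 1 ∨ ε i = -1) ∧
              x = u * (y * Matrix.diagonal (fun i => ε i * Real.sqrt (μ i)) * yᵀ)⁻¹) ∧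
            x.det = -1}
            = F '' {ε : Fin n → ℝ | (∀ i, ε i = 1 ∨ ε i = -1) ∧ ∏ i, ε i = -c} := by
          ext x
          constructor
          · rintro ⟨⟨ε, hε, rfl⟩, hdet1⟩
            refine ⟨ε, ⟨hε, ?_⟩, rfl⟩
            have := hFdet2 ε hε
            rw [hFdef] at this
            simp only at this
            rw [this] at hdet1
            have h5 : c * (c * ∏ i, ε i) = c * (-1) := by rw [hdet1]
            rw [← mul_assoc, hcc, one_mul] at h5
            rw [h5]; ring
          · rintro ⟨ε, ⟨hε, hprod⟩, rfl⟩
            refine ⟨⟨ε, hε, rfl⟩, ?_⟩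
            rw [hFdet2 ε hε, hprod]
            have : c * -c = -(c * c) := by ring
            rw [this, hcc]
        rw [hTeq, Set.ncard_image_of_injOn (hFinj.mono (fun ε hε => hε.1))]
        refine aux_sign_card n hn (-c) ?_
        rcases hc with h | h <;> rw [h] <;> norm_num }
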